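/- arXiv:2306.13978 — 3 statements merged into one kernel-verified Lean document; each statement's English description precedes it below -/
import Mathlib

section
/- Let a₀ = 1 and a₁,…,a_d ∈ ℝ, and define the linear operator T on real polynomials of degree at most d by T(p) = Σ_{j=0}^{d} a_j p^{(j)}. If the polynomial Q(z) = T(z^d) = Σ_{j=0}^{d} a_j (d!/(d−j)!) z^{d−j} has only real roots, then T preserves real-rootedness: for every real polynomial p of degree at most d with only real roots, T(p) has only real roots. -/
open Polynomial

/-- The differential operator `T p = Σ_{j=0}^d a_j p^{(j)}`. -/
noncomputable def Tdiff (d : ℕ) (a : ℕ → ℝ) (p : Polynomial ℝ) : Polynomial ℝ :=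
  ∑ j ∈ Finset.range (d + 1), a j • (Polynomial.derivative^[j] p)

/-- Cauchy–Schwarz for multisets of nonneg reals. -/
lemma ms_sq_sum_le (s : Multiset ℝ) (h : ∀ x ∈ s, 0 ≤ x) :
    (s.sum) ^ 2 ≤ (s.card : ℝ) * (s.map (fun x => x ^ 2)).sum := by
  induction s using Multiset.induction_on with
  | empty => simp
  | cons a s ih =>
    have ha : 0 ≤ a := h a (Multiset.mem_cons_self a s)
    have hs : ∀ x ∈ s, 0 ≤ x := fun x hx => h x (Multiset.mem_cons_of_mem hx)
    have ht : 0 ≤ s.sum := Multiset.sum_nonneg hs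
    have hT : 0 ≤ (s.map (fun x => x ^ 2)).sum := by
      apply Multiset.sum_nonneg; intro x hx
      obtain ⟨y, _, rfl⟩ := Multiset.mem_map.mp hx
      positivity
    have ihs := ih hs
    simp only [Multiset.sum_cons, Multiset.card_cons, Multiset.map_cons]
    push_cast
    set t := s.sum
    set T := (s.map (fun x => x ^ 2)).sum
    have hkk : ((Multiset.card (a ::ₘ s) : ℝ)) = (Multiset.card s : ℝ) + 1 := by push_cast; simp
    have hk : (0:ℝ) ≤ (Multiset.card s : ℝ) := Nat.cast_nonneg _
    rcases eq_or_lt_of_le hk with hk0 | hk0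
    · have hcard : Multiset.card s = 0 := by exact_mod_cast hk0.symm
      have hs0 : s = 0 := Multiset.card_eq_zero.mp hcard
      have ht0 : t = 0 := by simp [t, hs0]
      have hT0 : T = 0 := by simp [T, hs0]
      rw [ht0, hT0, ← hk0]
      nlinarith
    · nlinarith [sq_nonneg ((Multiset.card s : ℝ) * a - t), mul_pos hk0 hk0]

/-- log derivative of a product of linear factors. -/
lemma eval_derivative_prod (c : ℂ) (R : Multiset ℂ) (z : ℂ) (hz : ∀ x ∈ R, z ≠ x) :
    eval z (derivative (C c * (R.map (fun x => X - C x)).prod)) =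
      eval z (C c * (R.map (fun x => X - C x)).prod) *
        (R.map (fun x => (z - x)⁻¹)).sum := by
  induction R using Multiset.induction_on with
  | empty => simp
  | cons a R ih =>
    have hza : z - a ≠ 0 := sub_ne_zero.mpr (hz a (Multiset.mem_cons_self a R))
    have hz' : ∀ x ∈ R, z ≠ x := fun x hx => hz x (Multiset.mem_cons_of_mem hx)
    have ih' := ih hz'
    simp only [Multiset.map_cons, Multiset.prod_cons, Multiset.sum_cons]
    have hre : C c * ((X - C a) * (R.map (fun x => X - C x)).prod)
        = (X - C a) * (C c * (R.map (fun x => X - C x)).prod) := by ring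
    rw [hre, derivative_mul]
    simp only [derivative_sub, derivative_X, derivative_C, sub_zero, one_mul, eval_add,
      eval_mul, eval_sub, eval_X, eval_C, ih']
    field_simp

lemma ms_im_sum (m : Multiset ℂ) : m.sum.im = (m.map Complex.im).sum := by
  induction m using Multiset.induction_on with
  | empty => simp
  | cons a s ih => simp [Complex.add_im, ih]

lemma ms_sum_le {α : Type*} (s : Multiset α) (f g : α → ℝ) (h : ∀ x ∈ s, f x ≤ g x) :
    (s.map f).sum ≤ (s.map g).sum := by
  induction s using Multiset.induction_on with
  | empty => simp
  | cons a s ih =>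
    simp only [Multiset.map_cons, Multiset.sum_cons]
    exact add_le_add (h a (Multiset.mem_cons_self a s))
      (ih fun x hx => h x (Multiset.mem_cons_of_mem hx))

/-- Laguerre-type lemma: the polar derivative w.r.t. a point in the upper half
plane of an upper-half-plane-nonvanishing polynomial does not vanish in the UHP. -/
lemma lemA {f : Polynomial ℂ} (hf : f ≠ 0)
    (hst : ∀ z : ℂ, 0 < z.im → eval z f ≠ 0) {d : ℕ} (hd : 1 ≤ d)
    (hn : f.natDegree ≤ d) {z w : ℂ} (hz : 0 < z.im) (hw : 0 < w.im) :
    (d : ℂ) * eval z f - (z - w) * eval z (derivative f) ≠ 0 := by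
  set R := f.roots with hR
  have hroots_im : ∀ x ∈ R, x.im ≤ 0 := by
    intro x hx
    by_contra hc
    push_neg at hc
    exact hst x hc ((mem_roots hf).mp hx)
  have hzx : ∀ x ∈ R, z ≠ x := by
    intro x hx he
    rw [he] at hz
    exact absurd (hroots_im x hx) (not_le.mpr hz)
  have hsplit : f = C f.leadingCoeff * (R.map fun a => X - C a).prod :=
    (C_leadingCoeff_mul_prod_multiset_X_sub_C (splits_iff_card_roots.mp (IsAlgClosed.splits f))).symm
  have hcard : Multiset.card R = f.natDegree :=
    splits_iff_card_roots.mp (IsAlgClosed.splits f)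
  set S := (R.map fun x => (z - x)⁻¹).sum with hS
  have hfz : eval z f ≠ 0 := hst z hz
  have hlog : eval z (derivative f) = eval z f * S := by
    conv_lhs => rw [hsplit]
    conv_rhs => rw [hsplit]
    exact eval_derivative_prod _ _ _ hzx
  intro h0
  have key : (d : ℂ) * eval z f = (z - w) * (eval z f * S) := by
    rw [← hlog]; linear_combination h0
  have key2 : (d : ℂ) = (z - w) * S := by
    have h : (d : ℂ) * eval z f = ((z - w) * S) * eval z f := by linear_combination key
    exact mul_right_cancel₀ hfz h
  have hS0 : S ≠ 0 := by
    intro h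
    rw [h, mul_zero] at key2
    have : (d : ℂ) ≠ 0 := Nat.cast_ne_zero.mpr (by omega)
    exact this key2
  have hzw : (d : ℂ) * S⁻¹ = z - w := (mul_inv_eq_iff_eq_mul₀ hS0).mpr key2
  have hw2 : w = z - (d : ℂ) * S⁻¹ := by linear_combination hzw
  have him : w.im = z.im - (d : ℝ) * (S⁻¹).im := by
    rw [hw2, Complex.sub_im]
    congr 1
    simp [Complex.mul_im]
  rw [Complex.inv_im] at him
  set T := (R.map fun x => (Complex.normSq (z - x))⁻¹).sum with hT
  have hTnn : 0 ≤ T := by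
    apply Multiset.sum_nonneg
    intro y hy
    obtain ⟨x, _, rfl⟩ := Multiset.mem_map.mp hy
    exact inv_nonneg.mpr (Complex.normSq_nonneg _)
  have hSim : S.im = (R.map fun x => ((z - x)⁻¹).im).sum := by
    rw [hS, ms_im_sum, Multiset.map_map]
    rfl
  have hSimle : S.im ≤ -z.im * T := by
    rw [hSim, hT, ← Multiset.sum_map_mul_left]
    apply ms_sum_le
    intro x hx
    have hne : z - x ≠ 0 := sub_ne_zero.mpr (hzx x hx)
    have hq : 0 < Complex.normSq (z - x) := Complex.normSq_pos.mpr hne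
    rw [Complex.inv_im]
    rw [div_le_iff₀ hq]
    have : z.im ≤ (z - x).im := by
      rw [Complex.sub_im]
      linarith [hroots_im x hx]
    calc -(z - x).im ≤ -z.im := by linarith
      _ = -z.im * (Complex.normSq (z-x))⁻¹ * Complex.normSq (z - x) := by
          field_simp
  have habs : ‖S‖ ≤ (R.map fun x => ‖z - x‖⁻¹).sum := by
    have h1 := norm_multiset_sum_le (R.map fun x => (z - x)⁻¹)
    rw [Multiset.map_map] at h1
    calc ‖S‖ = ‖S‖ := rfl
      _ ≤ _ := by
          refine h1.trans_eq ?_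
          congr 1
          apply Multiset.map_congr rfl
          intro x _
          simp [norm_inv]
  have hCS := ms_sq_sum_le (R.map fun x => ‖z - x‖⁻¹) (by
    intro y hy
    obtain ⟨x, _, rfl⟩ := Multiset.mem_map.mp hy
    positivity)
  rw [Multiset.card_map, Multiset.map_map] at hCS
  have hTeq : (R.map ((fun x => x ^ 2) ∘ fun x => ‖z - x‖⁻¹)).sum = T := by
    rw [hT]
    congr 1
    apply Multiset.map_congr rfl
    intro x _
    simp only [Function.comp_apply]
    rw [← Complex.sq_norm, ← inv_pow]
  rw [hTeq] at hCS
  have hnS : 0 < Complex.normSq S := Complex.normSq_pos.mpr hS0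
  have hd1 : (1 : ℝ) ≤ (d : ℝ) := by exact_mod_cast hd
  have hcardle : (Multiset.card R : ℝ) ≤ (d : ℝ) := by
    rw [hcard]
    exact_mod_cast hn
  have hns_le : Complex.normSq S ≤ (d : ℝ) * T := by
    have h2 : ‖S‖ ^ 2 ≤ ((R.map fun x => ‖z - x‖⁻¹).sum) ^ 2 :=
      pow_le_pow_left₀ (norm_nonneg S) habs 2
    have h3 : ((Multiset.card R : ℝ)) * T ≤ (d : ℝ) * T :=
      mul_le_mul_of_nonneg_right hcardle hTnn
    calc Complex.normSq S = ‖S‖ ^ 2 := (Complex.sq_norm S).symm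
      _ ≤ _ := h2
      _ ≤ ((Multiset.card R : ℝ)) * T := hCS
      _ ≤ (d : ℝ) * T := h3
  have hnum : z.im * Complex.normSq S + (d : ℝ) * S.im ≤ 0 := by
    have h4 : (d : ℝ) * S.im ≤ (d : ℝ) * (-z.im * T) :=
      mul_le_mul_of_nonneg_left hSimle (by linarith)
    have h5 : z.im * Complex.normSq S ≤ z.im * ((d : ℝ) * T) :=
      mul_le_mul_of_nonneg_left hns_le (le_of_lt hz)
    nlinarith
  have hwim : w.im ≤ 0 := by
    rw [him]
    rw [div_eq_mul_inv]
    have : z.im - (d : ℝ) * (-S.im * (Complex.normSq S)⁻¹)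
        = (z.im * Complex.normSq S + (d : ℝ) * S.im) / Complex.normSq S := by
      field_simp
      try ring
    rw [this]
    exact div_nonpos_of_nonpos_of_nonneg hnum (le_of_lt hnS)
  linarith

noncomputable def Tc (d : ℕ) (a : ℕ → ℝ) (f : Polynomial ℂ) : Polynomial ℂ :=
  ∑ j ∈ Finset.range (d + 1), (a j : ℂ) • (derivative^[j] f)

noncomputable def Acoef (d : ℕ) (Q : Polynomial ℝ) (j : ℕ) : ℝ :=
  Q.coeff (d - j) * (Nat.factorial (d - j)) / (Nat.factorial d)

lemma iter_deriv_X_mul_deriv (f : Polynomial ℂ) (j : ℕ) :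
    derivative^[j] (X * derivative f)
      = X * derivative^[j + 1] f + (j : ℂ) • derivative^[j] f := by
  induction j with
  | zero => simp
  | succ j ih =>
    rw [Function.iterate_succ_apply', ih]
    rw [derivative_add, derivative_mul, derivative_X, derivative_smul]
    rw [← Function.iterate_succ_apply' derivative (j+1) f,
        ← Function.iterate_succ_apply' derivative j f, one_mul]
    push_cast
    module

lemma Tc_add (d : ℕ) (a : ℕ → ℝ) (f g : Polynomial ℂ) :
    Tc d a (f + g) = Tc d a f + Tc d a g := by
  unfold Tc
  rw [← Finset.sum_add_distrib]
  apply Finset.sum_congr rfl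
  intro j _
  rw [iterate_map_add derivative j f g, smul_add]

lemma Tc_csmul (d : ℕ) (a : ℕ → ℝ) (c : ℂ) (f : Polynomial ℂ) :
    Tc d a (c • f) = c • Tc d a f := by
  unfold Tc
  rw [Finset.smul_sum]
  apply Finset.sum_congr rfl
  intro j _
  rw [Polynomial.iterate_derivative_smul, smul_comm]

lemma coeff_rec0 (d : ℕ) (r : ℝ) (Q Q₁ : Polynomial ℝ) (hQ : Q = (X - C r) * Q₁)
    (hdeg : Q₁.natDegree = d) :
    ((d : ℝ) + 1) * Acoef (d + 1) Q 0 = ((d : ℝ) + 1 - 0) * Acoef d Q₁ 0 := by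
  have hc : Q.coeff (d + 1) = Q₁.coeff d := by
    rw [hQ, sub_mul, coeff_sub, coeff_X_mul, coeff_C_mul,
      coeff_eq_zero_of_natDegree_lt (by omega : Q₁.natDegree < d + 1), mul_zero, sub_zero]
  have h1 : (((d+1).factorial : ℝ)) ≠ 0 := by exact_mod_cast (d+1).factorial_ne_zero
  have h2 : ((d.factorial : ℝ)) ≠ 0 := by exact_mod_cast d.factorial_ne_zero
  unfold Acoef
  simp only [Nat.sub_zero, hc]
  field_simp
  ring

lemma coeff_recS (d : ℕ) (r : ℝ) (Q Q₁ : Polynomial ℝ) (hQ : Q = (X - C r) * Q₁)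
    (hdeg : Q₁.natDegree = d) (k : ℕ) (hk : k ≤ d) :
    ((d : ℝ) + 1) * Acoef (d + 1) Q (k + 1)
      = ((d : ℝ) + 1 - ((k : ℝ) + 1)) * Acoef d Q₁ (k + 1) - r * Acoef d Q₁ k := by
  have hfac : ((d + 1).factorial : ℝ) = ((d : ℝ) + 1) * (d.factorial : ℝ) := by
    rw [Nat.factorial_succ]; push_cast; ring
  have hdfac : (d.factorial : ℝ) ≠ 0 := by exact_mod_cast d.factorial_ne_zero
  have hidx : d + 1 - (k + 1) = d - k := by omega
  rcases Nat.eq_or_lt_of_le hk with hkd | hkd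
  · -- k = d
    subst hkd
    have h0 : Q.coeff 0 = - (r * Q₁.coeff 0) := by
      rw [hQ, sub_mul, coeff_sub, mul_coeff_zero, coeff_X_zero, zero_mul, coeff_C_mul, zero_sub]
    unfold Acoef
    rw [hidx]
    simp only [Nat.sub_self, Nat.factorial_zero, h0]
    have hcast : ((k : ℝ) + 1 : ℝ) = (k : ℝ) + 1 := rfl
    rw [hfac]
    field_simp
    ring
  · -- k < d
    obtain ⟨m, hm⟩ : ∃ m, d - k = m + 1 := ⟨d - k - 1, by omega⟩
    have hc : Q.coeff (d - k) = Q₁.coeff m - r * Q₁.coeff (d - k) := by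
      rw [hQ, sub_mul, coeff_sub, coeff_C_mul, hm, coeff_X_mul]
    have hidx2 : d - (k + 1) = m := by omega
    have hsubcast : ((d : ℝ) + 1 - ((k : ℝ) + 1)) = ((m : ℝ) + 1) := by
      have : d = m + 1 + k := by omega
      subst this; push_cast; ring
    unfold Acoef
    rw [hidx, hc, hm, hidx2, hsubcast, hfac, Nat.factorial_succ]
    push_cast
    field_simp

lemma recR (d : ℕ) (r : ℝ) (Q Q₁ : Polynomial ℝ) (hQ : Q = (X - C r) * Q₁)
    (hdeg : Q₁.natDegree = d) (f : Polynomial ℂ) :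
    ((d : ℂ) + 1) • Tc (d + 1) (Acoef (d + 1) Q) f
      = (X - C (r : ℂ)) * Tc d (Acoef d Q₁) (derivative f)
        + Tc d (Acoef d Q₁) ((((d : ℕ) + 1 : ℕ) : ℂ) • f - X * derivative f) := by
  set a := Acoef (d + 1) Q with ha
  set b := Acoef d Q₁ with hb
  have hLHS : ((d : ℂ) + 1) • Tc (d + 1) a f
      = ∑ j ∈ Finset.range (d + 1 + 1), (((d : ℂ) + 1) * (a j : ℂ)) • derivative^[j] f := by
    unfold Tc
    rw [Finset.smul_sum]
    apply Finset.sum_congr rfl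
    intro j _
    rw [smul_smul]
  have hterm1 : (X - C (r : ℂ)) * Tc d b (derivative f)
      = ∑ j ∈ Finset.range (d + 1),
          ((b j : ℂ) • (X * derivative^[j + 1] f) - ((r : ℂ) * (b j : ℂ)) • derivative^[j + 1] f) := by
    unfold Tc
    rw [Finset.mul_sum]
    apply Finset.sum_congr rfl
    intro j _
    rw [← Function.iterate_succ_apply derivative j f]
    rw [mul_smul_comm, sub_mul, smul_sub]
    congr 1
    rw [← Polynomial.smul_eq_C_mul, smul_smul, mul_comm ((b j : ℂ)) ((r : ℂ))]
  have hterm2 : Tc d b ((((d : ℕ) + 1 : ℕ) : ℂ) • f - X * derivative f)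
      = ∑ j ∈ Finset.range (d + 1),
          (((((d : ℂ) + 1) - (j : ℂ)) * (b j : ℂ)) • derivative^[j] f
            - (b j : ℂ) • (X * derivative^[j + 1] f)) := by
    unfold Tc
    apply Finset.sum_congr rfl
    intro j hj
    rw [Polynomial.iterate_derivative_sub, Polynomial.iterate_derivative_smul,
      iter_deriv_X_mul_deriv]
    have hcast : ((((d : ℕ) + 1 : ℕ) : ℂ)) = (d : ℂ) + 1 := by push_cast; ring
    rw [hcast]
    module
  rw [hLHS, hterm1, hterm2, ← Finset.sum_add_distrib]
  have hstep : ∑ j ∈ Finset.range (d + 1),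
      (((b j : ℂ) • (X * derivative^[j + 1] f) - ((r : ℂ) * (b j : ℂ)) • derivative^[j + 1] f)
        + ((((d : ℂ) + 1 - (j : ℂ)) * (b j : ℂ)) • derivative^[j] f
            - (b j : ℂ) • (X * derivative^[j + 1] f)))
      = ∑ j ∈ Finset.range (d + 1),
          (((((d : ℂ) + 1) - (j : ℂ)) * (b j : ℂ)) • derivative^[j] f)
        - ∑ j ∈ Finset.range (d + 1), (((r : ℂ) * (b j : ℂ)) • derivative^[j + 1] f) := by
    rw [← Finset.sum_sub_distrib]
    apply Finset.sum_congr rfl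
    intro j _
    abel
  rw [hstep]
  have hG1 : ∑ j ∈ Finset.range (d + 1),
      (((((d : ℂ) + 1) - (j : ℂ)) * (b j : ℂ)) • derivative^[j] f)
      = ∑ j ∈ Finset.range (d + 1 + 1),
          (((((d : ℂ) + 1) - (j : ℂ)) * (b j : ℂ)) • derivative^[j] f) := by
    rw [Finset.sum_range_succ (fun j => (((((d : ℂ) + 1) - (j : ℂ)) * (b j : ℂ)) • derivative^[j] f)) (d+1)]
    have h0 : (((d : ℂ) + 1) - (((d+1 : ℕ)) : ℂ)) = 0 := by push_cast; ring
    rw [h0, zero_mul, zero_smul, add_zero]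
  obtain ⟨G2, hG20, hG2S⟩ : ∃ G2 : ℕ → Polynomial ℂ, G2 0 = 0 ∧
      ∀ k, G2 (k+1) = ((r : ℂ) * (b k : ℂ)) • derivative^[k + 1] f :=
    ⟨fun j => match j with
      | 0 => (0 : Polynomial ℂ)
      | Nat.succ k => ((r : ℂ) * (b k : ℂ)) • derivative^[k + 1] f, rfl, fun k => rfl⟩
  have hG2 : ∑ j ∈ Finset.range (d + 1), (((r : ℂ) * (b j : ℂ)) • derivative^[j + 1] f)
      = ∑ j ∈ Finset.range (d + 1 + 1), G2 j := by
    rw [Finset.sum_range_succ' G2 (d+1), hG20, add_zero]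
    apply Finset.sum_congr rfl
    intro j _
    rw [hG2S]
  rw [hG1, hG2, ← Finset.sum_sub_distrib]
  apply Finset.sum_congr rfl
  intro j hj
  have hjle : j ≤ d + 1 := by
    have := Finset.mem_range.mp hj; omega
  match j with
  | 0 =>
    rw [hG20]
    show (((d : ℂ) + 1) * (a 0 : ℂ)) • derivative^[0] f
        = (((d : ℂ) + 1 - ((0:ℕ):ℂ)) * (b 0 : ℂ)) • derivative^[0] f - 0
    rw [sub_zero]
    congr 1
    have hre := coeff_rec0 d r Q Q₁ hQ hdeg
    simp only [ha, hb]
    exact_mod_cast hre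
  | Nat.succ k =>
    have hk : k ≤ d := by omega
    rw [hG2S]
    show (((d : ℂ) + 1) * (a (k+1) : ℂ)) • derivative^[k+1] f
        = (((d : ℂ) + 1 - ((k+1:ℕ):ℂ)) * (b (k+1) : ℂ)) • derivative^[k+1] f
          - ((r:ℂ) * (b k : ℂ)) • derivative^[k+1] f
    rw [← sub_smul]
    congr 1
    have hre := coeff_recS d r Q Q₁ hQ hdeg k hk
    simp only [ha, hb]
    exact_mod_cast hre

lemma mainInd (d : ℕ) : ∀ Q : Polynomial ℝ, Q.Monic → Q.natDegree = d →
    (∀ z : ℂ, aeval z Q = 0 → z.im = 0) →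
    ∀ f : Polynomial ℂ, f ≠ 0 → f.natDegree ≤ d →
    (∀ z : ℂ, 0 < z.im → eval z f ≠ 0) →
    ∀ z : ℂ, 0 < z.im → eval z (Tc d (Acoef d Q) f) ≠ 0 := by
  induction d with
  | zero =>
    intro Q hmon hdeg _ f _ _ hfst z hz
    have ha0 : Acoef 0 Q 0 = 1 := by
      unfold Acoef
      have h1 : Q.coeff 0 = 1 := by
        have := hmon.coeff_natDegree
        rwa [hdeg] at this
      simp [h1]
    have : Tc 0 (Acoef 0 Q) f = f := by
      unfold Tc
      rw [Finset.sum_range_one, ha0]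
      simp
    rw [this]
    exact hfst z hz
  | succ d ih =>
    intro Q hmon hdeg hroots f hf hfd hfst z hz
    -- find a real root of Q
    have hQne : Q ≠ 0 := hmon.ne_zero
    have hmapdeg : 0 < (Q.map (algebraMap ℝ ℂ)).degree := by
      rw [Polynomial.degree_map_eq_of_injective (algebraMap ℝ ℂ).injective]
      rw [Polynomial.degree_eq_natDegree hQne, hdeg]
      exact_mod_cast Nat.succ_pos d
    obtain ⟨z₁, hz₁⟩ := Complex.exists_root hmapdeg
    have haev : aeval z₁ Q = 0 := by
      rw [aeval_def, ← Polynomial.eval_map]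
      exact hz₁
    have him : z₁.im = 0 := hroots z₁ haev
    set r := z₁.re with hr
    have hz₁r : ((r : ℂ)) = z₁ := by
      apply Complex.ext <;> simp [him, hr]
    have hroot : Q.IsRoot r := by
      have h2 : aeval ((algebraMap ℝ ℂ) r) Q = (algebraMap ℝ ℂ) (Q.eval r) := by
        rw [Polynomial.aeval_algebraMap_apply_eq_algebraMap_eval]
      have h3 : aeval ((r : ℂ)) Q = 0 := by rw [hz₁r]; exact haev
      have h4 : (algebraMap ℝ ℂ) (Q.eval r) = 0 := by
        rw [← h2]
        exact h3
      exact (_root_.map_eq_zero (algebraMap ℝ ℂ)).mp h4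
    obtain ⟨Q₁, hfac⟩ : (X - C r) ∣ Q := dvd_iff_isRoot.mpr hroot
    have hmon₁ : Q₁.Monic := (monic_X_sub_C r).of_mul_monic_left (hfac ▸ hmon)
    have hdeg₁ : Q₁.natDegree = d := by
      have hXC : (X - C r) ≠ (0 : Polynomial ℝ) := (monic_X_sub_C r).ne_zero
      have hQ₁ne : Q₁ ≠ 0 := hmon₁.ne_zero
      have := natDegree_mul hXC hQ₁ne
      rw [← hfac, hdeg, natDegree_X_sub_C] at this
      omega
    have hroots₁ : ∀ w : ℂ, aeval w Q₁ = 0 → w.im = 0 := by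
      intro w hw
      apply hroots
      rw [hfac, map_mul, hw, mul_zero]
    intro hval
    -- evaluate the recursion identity at z
    have hrec := recR d r Q Q₁ hfac hdeg₁ f
    have hev := congrArg (eval z) hrec
    rw [eval_smul, hval, smul_zero, eval_add, eval_mul, eval_sub, eval_X, eval_C] at hev
    set w := z - (r : ℂ) with hw
    have hwim : 0 < w.im := by
      rw [hw, Complex.sub_im, Complex.ofReal_im]
      simpa using hz
    -- the auxiliary polynomial g
    set g := (((d : ℕ) + 1 : ℕ) : ℂ) • f - X * derivative f + C w * derivative f with hg
    have hgev : ∀ y : ℂ, eval y g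
        = (((d+1 : ℕ)) : ℂ) * eval y f - (y - w) * eval y (derivative f) := by
      intro y
      rw [hg]
      simp only [eval_add, eval_sub, eval_mul, eval_smul, eval_C, eval_X, smul_eq_mul]
      ring
    have hgst : ∀ y : ℂ, 0 < y.im → eval y g ≠ 0 := by
      intro y hy
      rw [hgev y]
      exact lemA hf hfst (show 1 ≤ d + 1 by omega) hfd hy hwim
    have hg0 : g ≠ 0 := by
      intro h
      exact hgst z hz (by rw [h, eval_zero])
    have hgdeg : g.natDegree ≤ d := by
      rw [natDegree_le_iff_coeff_eq_zero]
      intro N hN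
      obtain ⟨k, rfl⟩ : ∃ k, N = k + 1 := ⟨N - 1, by omega⟩
      rw [hg]
      rw [coeff_add, coeff_sub, coeff_smul, coeff_X_mul, coeff_C_mul, coeff_derivative,
        coeff_derivative]
      have hc2 : f.coeff (k + 1 + 1) = 0 :=
        coeff_eq_zero_of_natDegree_lt (by omega)
      rcases Nat.lt_or_ge (d+1) (k+1) with hcase | hcase
      · have hc1 : f.coeff (k + 1) = 0 := coeff_eq_zero_of_natDegree_lt (by omega)
        rw [hc1, hc2]
        simp
      · have hkd : k = d := by omega
        subst hkd
        rw [hc2, smul_eq_mul]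
        push_cast
        ring
    have hTg := ih Q₁ hmon₁ hdeg₁ hroots₁ g hg0 hgdeg hgst z hz
    apply hTg
    have hgsplit : g = ((((d : ℕ) + 1 : ℕ) : ℂ) • f - X * derivative f)
        + w • derivative f := by
      rw [hg]
      congr 1
      exact (Polynomial.smul_eq_C_mul w).symm
    rw [hgsplit, Tc_add, Tc_csmul, eval_add, eval_smul, smul_eq_mul]
    -- hev : 0 = (z - r) * eval z (Tc d b f') + eval z (Tc d b ((d+1)•f - X f'))
    linear_combination -hev

lemma Qcoeff (d : ℕ) (a : ℕ → ℝ) (j : ℕ) (hj : j ≤ d) :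
    (Tdiff d a (X ^ d)).coeff (d - j) = a j * (d.descFactorial j : ℝ) := by
  unfold Tdiff
  rw [finset_sum_coeff]
  rw [Finset.sum_eq_single j]
  · rw [Polynomial.iterate_derivative_X_pow_eq_smul, coeff_smul, coeff_smul, coeff_X_pow,
      if_pos rfl]
    simp [mul_comm]
  · intro i hi hij
    rw [Polynomial.iterate_derivative_X_pow_eq_smul, coeff_smul, coeff_smul, coeff_X_pow,
      if_neg (by have := Finset.mem_range.mp hi; omega)]
    simp
  · intro h
    exact absurd (Finset.mem_range.mpr (by omega)) h

lemma Qmonic (d : ℕ) (a : ℕ → ℝ) (ha0 : a 0 = 1) :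
    (Tdiff d a (X ^ d)).Monic ∧ (Tdiff d a (X ^ d)).natDegree = d := by
  have hcoeffd : (Tdiff d a (X ^ d)).coeff d = 1 := by
    have := Qcoeff d a 0 (Nat.zero_le d)
    simpa [ha0] using this
  have hdegle : (Tdiff d a (X ^ d)).natDegree ≤ d := by
    unfold Tdiff
    apply Polynomial.natDegree_sum_le_of_forall_le
    intro j hj
    apply le_trans (Polynomial.natDegree_smul_le _ _)
    rw [Polynomial.iterate_derivative_X_pow_eq_smul]
    apply le_trans (Polynomial.natDegree_smul_le _ _)
    apply le_trans (Polynomial.natDegree_X_pow_le _)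
    omega
  constructor
  · exact Polynomial.monic_of_natDegree_le_of_coeff_eq_one d hdegle hcoeffd
  · refine le_antisymm hdegle (Polynomial.le_natDegree_of_ne_zero ?_)
    rw [hcoeffd]
    exact one_ne_zero

lemma Acoef_eq (d : ℕ) (a : ℕ → ℝ) (j : ℕ) (hj : j ≤ d) :
    Acoef d (Tdiff d a (X ^ d)) j = a j := by
  unfold Acoef
  rw [Qcoeff d a j hj]
  have hfac : ((d - j).factorial : ℝ) * (d.descFactorial j : ℝ) = (d.factorial : ℝ) := by
    exact_mod_cast congrArg (Nat.cast : ℕ → ℝ) (Nat.factorial_mul_descFactorial hj)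
  have hd0 : ((d.factorial : ℝ)) ≠ 0 := by exact_mod_cast d.factorial_ne_zero
  field_simp
  linear_combination a j * hfac

lemma Tdiff_map (d : ℕ) (a : ℕ → ℝ) (p : Polynomial ℝ) :
    (Tdiff d a p).map (algebraMap ℝ ℂ) = Tc d a (p.map (algebraMap ℝ ℂ)) := by
  unfold Tdiff Tc
  rw [Polynomial.map_sum]
  apply Finset.sum_congr rfl
  intro j _
  rw [Polynomial.smul_eq_C_mul, Polynomial.map_mul, Polynomial.map_C,
    Polynomial.iterate_derivative_map, ← Polynomial.smul_eq_C_mul]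
  norm_cast

lemma aeval_eq_eval_map (q : Polynomial ℝ) (z : ℂ) :
    aeval z q = eval z (q.map (algebraMap ℝ ℂ)) := by
  rw [aeval_def, Polynomial.eval_map]

theorem stmt_5 (d : ℕ) (a : ℕ → ℝ) (ha0 : a 0 = 1)
    -- `Q(z) = T(z^d) = Σ_j a_j (d!/(d−j)!) z^{d−j}` has only real roots:
    (hQ : ∀ z : ℂ, Polynomial.aeval z (Tdiff d a (Polynomial.X ^ d)) = 0 → z.im = 0) :
    -- then `T` preserves real-rootedness on polynomials of degree at most `d`:
    ∀ p : Polynomial ℝ, p.natDegree ≤ d →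
      (∀ z : ℂ, Polynomial.aeval z p = 0 → z.im = 0) →
      (∀ z : ℂ, Polynomial.aeval z (Tdiff d a p) = 0 → z.im = 0) := by
  intro p hpd hproots z hTz
  have hp0 : p ≠ 0 := by
    intro h
    have := hproots Complex.I (by rw [h]; simp)
    simp [Complex.I_im] at this
  set Q := Tdiff d a (X ^ d) with hQdef
  obtain ⟨hQmon, hQdeg⟩ := Qmonic d a ha0
  set f := p.map (algebraMap ℝ ℂ) with hfdef
  have hf0 : f ≠ 0 := by
    rw [hfdef]
    exact (Polynomial.map_ne_zero_iff (algebraMap ℝ ℂ).injective).mpr hp0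
  have hfdeg : f.natDegree ≤ d := le_trans Polynomial.natDegree_map_le hpd
  have hfst : ∀ y : ℂ, 0 < y.im → eval y f ≠ 0 := by
    intro y hy hevy
    rw [hfdef, ← aeval_eq_eval_map] at hevy
    have := hproots y hevy
    linarith
  have hTc_eq : Tc d (Acoef d Q) f = Tc d a f := by
    unfold Tc
    apply Finset.sum_congr rfl
    intro j hj
    rw [hQdef, Acoef_eq d a j (by have := Finset.mem_range.mp hj; omega)]
  have hmain := mainInd d Q hQmon hQdeg hQ f hf0 hfdeg hfst
  have hTzval : eval z (Tc d a f) = 0 := by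
    rw [hfdef, ← Tdiff_map, ← aeval_eq_eval_map]
    exact hTz
  rcases lt_trichotomy z.im 0 with hneg | hzero | hpos
  · -- use the conjugate root
    set y := (starRingEnd ℂ) z with hy
    have hyim : 0 < y.im := by
      rw [hy]
      simp only [Complex.conj_im]
      linarith
    have hTy : eval y (Tc d a f) = 0 := by
      have hc : aeval (Complex.conjAe z) (Tdiff d a p) = Complex.conjAe (aeval z (Tdiff d a p)) :=
        Polynomial.aeval_algHom_apply Complex.conjAe z (Tdiff d a p)
      rw [hTz, map_zero] at hc
      have : aeval y (Tdiff d a p) = 0 := hc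
      rw [aeval_eq_eval_map, Tdiff_map, ← hfdef] at this
      exact this
    exact absurd (by rw [hTc_eq]; exact hTy) (hmain y hyim)
  · exact hzero
  · exact absurd (by rw [hTc_eq]; exact hTzval) (hmain z hpos)
end

section
/- Let P be a polynomial on ℝⁿ hyperbolic with respect to the xₙ direction, let 1 ≤ k ≤ n−1, and let s ∈ ℝ. Then the polynomial T_{k,s}(P) := P + s·x_k·∂P/∂xₙ is hyperbolic with respect to the xₙ direction. -/
open Polynomial

/-- Log-derivative formula for a product of linear factors. -/
lemma eval_derivative_prod_aux (a z : ℂ) (s : Multiset ℂ) (h : ∀ r ∈ s, z ≠ r) :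
    Polynomial.eval z (Polynomial.derivative
        (Polynomial.C a * (s.map fun r => Polynomial.X - Polynomial.C r).prod)) =
      Polynomial.eval z (Polynomial.C a * (s.map fun r => Polynomial.X - Polynomial.C r).prod) *
        (s.map fun r => (z - r)⁻¹).sum := by
  induction s using Multiset.induction_on with
  | empty => simp
  | cons r s ih =>
    have hr : z ≠ r := h r (Multiset.mem_cons_self r s)
    have h' : ∀ x ∈ s, z ≠ x := fun x hx => h x (Multiset.mem_cons_of_mem hx)
    have hz : (z - r) ≠ 0 := sub_ne_zero.mpr hr
    rw [Multiset.map_cons, Multiset.prod_cons, Multiset.map_cons, Multiset.sum_cons]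
    rw [show Polynomial.C a * ((Polynomial.X - Polynomial.C r) *
        (s.map fun t => Polynomial.X - Polynomial.C t).prod) =
        (Polynomial.X - Polynomial.C r) *
        (Polynomial.C a * (s.map fun t => Polynomial.X - Polynomial.C t).prod) by ring]
    rw [derivative_mul, eval_add, eval_mul, eval_mul, eval_mul, ih h']
    simp only [derivative_sub, derivative_X, derivative_C, sub_zero, eval_one, one_mul,
      eval_sub, eval_X, eval_C, eval_mul]
    field_simp

/-- If all complex roots of `f` are real, then all roots of `f + c·f'` are real, for real `c`. -/
lemma key_lemma (f : Polynomial ℂ) (hroots : ∀ w : ℂ, f.eval w = 0 → w.im = 0)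
    (c : ℝ) (z : ℂ) (hz : f.eval z + (c : ℂ) * (Polynomial.derivative f).eval z = 0) :
    z.im = 0 := by
  by_cases hfz : f.eval z = 0
  · exact hroots z hfz
  have hsplit := Polynomial.Splits.eq_prod_roots (f := f)
    (IsAlgClosed.splits f)
  have hzr : ∀ r ∈ f.roots, z ≠ r := by
    rintro r hr rfl
    exact hfz (Polynomial.isRoot_of_mem_roots hr)
  have hd := eval_derivative_prod_aux f.leadingCoeff z f.roots hzr
  rw [← hsplit] at hd
  set S : ℂ := (f.roots.map fun r => (z - r)⁻¹).sum with hS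
  rw [hd] at hz
  have h1 : (1 : ℂ) + (c : ℂ) * S = 0 := by
    have : f.eval z * (1 + (c : ℂ) * S) = 0 := by ring_nf; ring_nf at hz; linear_combination hz
    rcases mul_eq_zero.mp this with h | h
    · exact absurd h hfz
    · exact h
  have hc : c ≠ 0 := by
    rintro rfl
    simp at h1
  -- imaginary part of S
  have himS : S.im = -z.im * (f.roots.map fun r => (Complex.normSq (z - r))⁻¹).sum := by
    rw [hS]
    rw [show ((f.roots.map fun r => (z - r)⁻¹).sum).im
        = ((f.roots.map fun r => (z - r)⁻¹).map Complex.im).sum from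
      (map_multiset_sum Complex.imAddGroupHom _).symm ▸ rfl]
    rw [Multiset.map_map]
    rw [show (f.roots.map (Complex.im ∘ fun r => (z - r)⁻¹))
        = f.roots.map fun r => -z.im * (Complex.normSq (z - r))⁻¹ from
      Multiset.map_congr rfl (by
        intro r hr
        have hrim : r.im = 0 := hroots r (Polynomial.isRoot_of_mem_roots hr)
        simp only [Function.comp_apply, Complex.inv_im, Complex.sub_im, hrim, sub_zero]
        field_simp)]
    rw [Multiset.sum_map_mul_left]
  have hSim : S.im = 0 := by
    have h2 : ((1 : ℂ) + (c : ℂ) * S).im = 0 := by rw [h1]; rfl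
    simp only [Complex.add_im, Complex.one_im, Complex.mul_im, Complex.ofReal_re,
      Complex.ofReal_im, zero_mul, add_zero, zero_add] at h2
    exact (mul_eq_zero.mp h2).resolve_left hc
  -- the roots multiset is nonempty
  have hsne : f.roots ≠ 0 := by
    rintro h0
    rw [h0] at hS
    simp [hS] at h1
  obtain ⟨r, hr⟩ := Multiset.exists_mem_of_ne_zero hsne
  have hpos : 0 < (f.roots.map fun r => (Complex.normSq (z - r))⁻¹).sum := by
    have hmem : (Complex.normSq (z - r))⁻¹ ∈ f.roots.map fun r => (Complex.normSq (z - r))⁻¹ :=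
      Multiset.mem_map_of_mem _ hr
    have hnn : ∀ y ∈ f.roots.map fun r => (Complex.normSq (z - r))⁻¹, (0 : ℝ) ≤ y := by
      intro y hy
      obtain ⟨r', _, rfl⟩ := Multiset.mem_map.mp hy
      exact inv_nonneg.mpr (Complex.normSq_nonneg _)
    have hle := Multiset.single_le_sum hnn _ hmem
    have hzr' : z - r ≠ 0 := sub_ne_zero.mpr (hzr r hr)
    have : 0 < (Complex.normSq (z - r))⁻¹ := by
      have := Complex.normSq_pos.mpr hzr'
      positivity
    linarith
  have := himS
  rw [hSim] at this
  have : z.im * (f.roots.map fun r => (Complex.normSq (z - r))⁻¹).sum = 0 := by linarith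
  rcases mul_eq_zero.mp this with h | h
  · exact h
  · exact absurd h (ne_of_gt hpos)

/-- The substitution `Xᵢ ↦ xᵢ + eᵢ·t` as an algebra map into `ℂ[t]`. -/
noncomputable def phiMap (n : ℕ) (x : Fin (n + 1) → ℝ) :
    MvPolynomial (Fin (n + 1)) ℝ →ₐ[ℝ] Polynomial ℂ :=
  MvPolynomial.aeval fun i =>
    Polynomial.C ((x i : ℂ)) +
      Polynomial.C (((Pi.single (Fin.last n) 1 : Fin (n + 1) → ℝ) i : ℂ)) * Polynomial.X

lemma eval_phiMap (n : ℕ) (x : Fin (n + 1) → ℝ) (t : ℂ) (P : MvPolynomial (Fin (n + 1)) ℝ) :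
    (phiMap n x P).eval t =
      MvPolynomial.eval
        (fun i => (x i : ℂ) + t * ((Pi.single (Fin.last n) 1 : Fin (n + 1) → ℝ) i : ℂ))
        (MvPolynomial.map (algebraMap ℝ ℂ) P) := by
  induction P using MvPolynomial.induction_on with
  | C a => simp [phiMap]
  | add p q hp hq => simp [map_add, hp, hq]
  | mul_X p i hp =>
    rw [map_mul, Polynomial.eval_mul, hp, map_mul, MvPolynomial.eval_mul]
    congr 1
    simp only [phiMap, MvPolynomial.aeval_X, MvPolynomial.map_X, MvPolynomial.eval_X,
      Polynomial.eval_add, Polynomial.eval_mul, Polynomial.eval_C, Polynomial.eval_X]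
    ring

lemma derivative_phiMap (n : ℕ) (x : Fin (n + 1) → ℝ) (P : MvPolynomial (Fin (n + 1)) ℝ) :
    Polynomial.derivative (phiMap n x P) =
      phiMap n x (MvPolynomial.pderiv (Fin.last n) P) := by
  induction P using MvPolynomial.induction_on with
  | C a => simp [phiMap]
  | add p q hp hq => simp [map_add, hp, hq]
  | mul_X p i hp =>
    rw [MvPolynomial.pderiv_mul, map_mul, derivative_mul, hp]
    rw [map_add, map_mul]
    congr 1
    rw [MvPolynomial.pderiv_X]
    by_cases hi : i = Fin.last n
    · subst hi
      simp [phiMap, Pi.single_eq_same, Pi.single_apply]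
    · have : Fin.last n ≠ i := fun h => hi h.symm
      simp [phiMap, MvPolynomial.aeval_X, this, Pi.single_apply, Ne.symm this]

/-- `P` is (Gårding) hyperbolic with respect to the direction `e`. -/
def IsHyperbolic {n : ℕ} (P : MvPolynomial (Fin n) ℝ) (e : Fin n → ℝ) : Prop :=
  ∀ x : Fin n → ℝ, ∀ t : ℂ,
    MvPolynomial.eval (fun i => (x i : ℂ) + t * (e i : ℂ))
      (MvPolynomial.map (algebraMap ℝ ℂ) P) = 0 → t.im = 0

/-- The first-order Nuij operator `T_{k,s}(P) = P + s·x_k·∂P/∂xₙ` preserves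
hyperbolicity with respect to the `xₙ` direction (here `k` ranges over the
first `n` variables, i.e. `1 ≤ k ≤ n − 1` in the variables `x₁,…,xₙ`). -/
theorem stmt_7 (n : ℕ) (P : MvPolynomial (Fin (n + 1)) ℝ)
    (hP : IsHyperbolic P (Pi.single (Fin.last n) 1))
    (k : Fin n) (s : ℝ) :
    IsHyperbolic
      (P + MvPolynomial.C s * MvPolynomial.X (Fin.castSucc k) *
        MvPolynomial.pderiv (Fin.last n) P)
      (Pi.single (Fin.last n) 1) := by
  intro x t ht
  have hk : (Fin.castSucc k : Fin (n + 1)) ≠ Fin.last n := (Fin.castSucc_lt_last k).ne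
  have hek : ((Pi.single (Fin.last n) 1 : Fin (n + 1) → ℝ) (Fin.castSucc k) : ℂ) = 0 := by
    rw [Pi.single_apply, if_neg hk]; simp
  simp only [map_add, map_mul, MvPolynomial.map_C, MvPolynomial.map_X, MvPolynomial.eval_add,
    MvPolynomial.eval_mul, MvPolynomial.eval_C, MvPolynomial.eval_X] at ht
  rw [hek, mul_zero, add_zero] at ht
  set f := phiMap n x P with hf
  have hroots : ∀ w : ℂ, f.eval w = 0 → w.im = 0 := by
    intro w hw
    rw [eval_phiMap] at hw
    exact hP x w hw
  apply key_lemma f hroots (s * x (Fin.castSucc k)) t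
  rw [eval_phiMap, derivative_phiMap, eval_phiMap]
  push_cast
  rw [show ((s : ℂ) * (x (Fin.castSucc k) : ℂ)) *
      (MvPolynomial.eval
        (fun i => (x i : ℂ) + t * ((Pi.single (Fin.last n) 1 : Fin (n + 1) → ℝ) i : ℂ))
        (MvPolynomial.map (algebraMap ℝ ℂ) (MvPolynomial.pderiv (Fin.last n) P)))
      = algebraMap ℝ ℂ s * (x (Fin.castSucc k) : ℂ) *
      (MvPolynomial.eval
        (fun i => (x i : ℂ) + t * ((Pi.single (Fin.last n) 1 : Fin (n + 1) → ℝ) i : ℂ))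
        (MvPolynomial.map (algebraMap ℝ ℂ) (MvPolynomial.pderiv (Fin.last n) P))) from rfl]
  exact ht
end

section
/- Let T: ℂ_d[z] → ℂ_d[z] be a linear operator defined by T(p) = Σ_{j=0}^{d} a_j p^{(j)} with complex constants a_j, a₀ = 1. For the extension T̄(z^k w^l) := T(z^k)w^l, if T̄((z+w)^d) is a stable polynomial in (z,w), then T preserves stability: whenever p ∈ ℂ_d[z] is stable (nonvanishing on the open upper half-plane), T(p) is stable or identically zero. -/
open Polynomial

/-- The differential operator `T p = Σ_{j=0}^d a_j p^{(j)}` on `ℂ_d[z]`. -/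
noncomputable def TdiffC (d : ℕ) (a : ℕ → ℂ) (p : Polynomial ℂ) : Polynomial ℂ :=
  ∑ j ∈ Finset.range (d + 1), a j • (Polynomial.derivative^[j] p)

/-- The coefficientwise extension `T̄` to `ℂ[z][w]` (outer variable `w`,
coefficients polynomials in `z`): `T̄(zᵏ wˡ) = T(zᵏ) wˡ`. -/
noncomputable def TbarC (d : ℕ) (a : ℕ → ℂ) (q : Polynomial (Polynomial ℂ)) :
    Polynomial (Polynomial ℂ) :=
  q.sum fun l c => Polynomial.C (TdiffC d a c) * Polynomial.X ^ l

namespace BBaux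

/-- Cauchy–Schwarz for multisets of complex numbers. -/
lemma normSq_sum_le (s : Multiset ℂ) :
    Complex.normSq s.sum ≤ s.card * (s.map Complex.normSq).sum := by
  induction s using Multiset.induction_on with
  | empty => simp
  | cons a s ih =>
    by_cases hs : s = 0
    · simp [hs]
    have hcard : (1 : ℝ) ≤ s.card := by
      have : s.card ≠ 0 := by simpa using hs
      exact_mod_cast Nat.one_le_iff_ne_zero.mpr this
    simp only [Multiset.sum_cons, Multiset.card_cons, Multiset.map_cons]
    have habs : ‖a + s.sum‖ ≤ ‖a‖ + ‖s.sum‖ :=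
      norm_add_le _ _
    have h1 : Complex.normSq (a + s.sum) ≤ (‖a‖ + ‖s.sum‖) ^ 2 := by
      rw [← Complex.sq_norm]
      exact pow_le_pow_left₀ (norm_nonneg _) habs 2
    have h2 : (‖s.sum‖) ^ 2 ≤ s.card * (s.map Complex.normSq).sum := by
      rw [Complex.sq_norm]; exact ih
    have hQ : (0 : ℝ) ≤ (s.map Complex.normSq).sum := by
      apply Multiset.sum_nonneg
      intro x hx
      obtain ⟨y, _, rfl⟩ := Multiset.mem_map.mp hx
      exact Complex.normSq_nonneg _
    have hA : (0:ℝ) ≤ ‖a‖ := norm_nonneg _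
    have hS : (0:ℝ) ≤ ‖s.sum‖ := norm_nonneg _
    have hsq : Complex.normSq a = (‖a‖)^2 := (Complex.sq_norm a).symm
    push_cast
    set A := ‖a‖
    set S := ‖s.sum‖
    set n := (s.card : ℝ)
    set Q := (s.map Complex.normSq).sum
    have key : (A + S)^2 ≤ (n + 1) * (A^2 + Q) := by
      nlinarith [sq_nonneg (n * A - S), hcard,
        mul_nonneg (by linarith : (0:ℝ) ≤ n + 1) (by linarith : (0:ℝ) ≤ n * Q - S^2)]
    calc Complex.normSq (a + s.sum) ≤ (A + S)^2 := h1
      _ ≤ (n + 1) * (A^2 + Q) := key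
      _ = (n + 1) * (Complex.normSq a + Q) := by rw [hsq]

/-- logarithmic derivative of a product of linear factors, evaluated. -/
lemma deriv_prod_eval (s : Multiset ℂ) (w : ℂ) (h : ∀ r ∈ s, w - r ≠ 0) :
    (derivative ((s.map fun r => X - C r).prod)).eval w
      = ((s.map fun r => X - C r).prod).eval w * (s.map fun r => (w - r)⁻¹).sum := by
  induction s using Multiset.induction_on with
  | empty => simp
  | cons a s ih =>
    have ha : w - a ≠ 0 := h a (Multiset.mem_cons_self _ _)
    have ih' := ih (fun r hr => h r (Multiset.mem_cons_of_mem hr))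
    simp only [Multiset.map_cons, Multiset.prod_cons, Multiset.sum_cons, derivative_mul,
      derivative_sub, derivative_X, derivative_C, sub_zero, one_mul, eval_add, eval_mul,
      eval_sub, eval_X, eval_C]
    rw [ih']
    field_simp


/-- Laguerre's theorem for the closed lower half-plane. -/
lemma laguerre (p : Polynomial ℂ) (hst : ∀ u : ℂ, 0 < u.im → p.eval u ≠ 0)
    (m : ℕ) (hm : 1 ≤ m) (hdeg : p.natDegree ≤ m) {ζ w : ℂ} (hζ : 0 < ζ.im) (hw : 0 < w.im) :
    (m : ℂ) * p.eval w + (ζ - w) * (derivative p).eval w ≠ 0 := by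
  have hp0 : p ≠ 0 := by
    intro h
    exact hst Complex.I (by simp) (by simp [h])
  have hsp : p.Splits := IsAlgClosed.splits p
  have hfact := hsp.eq_prod_roots
  set s := p.roots with hs
  have hcard : s.card = p.natDegree := (splits_iff_card_roots).mp hsp
  have him : ∀ r ∈ s, r.im ≤ 0 := by
    intro r hr
    by_contra hc
    push_neg at hc
    exact hst r hc (isRoot_of_mem_roots hr)
  have hwr : ∀ r ∈ s, w - r ≠ 0 := by
    intro r hr hc
    rw [sub_eq_zero] at hc
    have := him r hr
    rw [← hc] at this
    linarith
  set P := (s.map fun r => X - C r).prod with hP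
  have hPne : P.eval w ≠ 0 := by
    rw [hP, eval_multiset_prod]
    apply Multiset.prod_ne_zero
    intro h0
    obtain ⟨q, hq, hq0⟩ := Multiset.mem_map.mp h0
    obtain ⟨r, hr, rfl⟩ := Multiset.mem_map.mp hq
    simp only [eval_sub, eval_X, eval_C] at hq0
    exact hwr r hr hq0
  have hlc : p.leadingCoeff ≠ 0 := leadingCoeff_ne_zero.mpr hp0
  set σ := (s.map fun r => (w - r)⁻¹).sum with hσdef
  have hpw : p.eval w = p.leadingCoeff * P.eval w := by
    conv_lhs => rw [hfact]
    simp
  have hdw : (derivative p).eval w = p.leadingCoeff * (P.eval w * σ) := by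
    conv_lhs => rw [hfact]
    rw [derivative_C_mul, eval_mul, eval_C, deriv_prod_eval s w hwr]
  intro heq
  have key : (m : ℂ) + (ζ - w) * σ = 0 := by
    have h2 : p.leadingCoeff * P.eval w * ((m : ℂ) + (ζ - w) * σ) = 0 := by
      rw [hpw, hdw] at heq
      linear_combination heq
    rcases mul_eq_zero.mp h2 with h | h
    · exact absurd h (mul_ne_zero hlc hPne)
    · exact h
  have hmC : (m : ℂ) ≠ 0 := Nat.cast_ne_zero.mpr (by omega)
  have hσ : σ ≠ 0 := by
    intro h
    rw [h, mul_zero, add_zero] at key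
    exact hmC key
  -- imaginary parts
  have hζw : ζ - w = -(m : ℂ) / σ := by
    rw [eq_div_iff hσ]
    linear_combination key
  have hnσ : 0 < Complex.normSq σ := Complex.normSq_pos.mpr hσ
  -- imaginary part of each inverse term
  set t : ℂ → ℝ := fun r => Complex.normSq ((w - r)⁻¹) with ht
  have himinv : ∀ r ∈ s, ((w - r)⁻¹).im ≤ -w.im * t r := by
    intro r hr
    have h1 : ((w - r)⁻¹).im = -(w.im - r.im) / Complex.normSq (w - r) := by
      rw [Complex.inv_im]; simp
    have h2 : t r = (Complex.normSq (w - r))⁻¹ := by rw [ht]; simp [Complex.normSq_inv]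
    have h3 : 0 < Complex.normSq (w - r) := Complex.normSq_pos.mpr (hwr r hr)
    rw [h1, h2]
    rw [div_eq_mul_inv]
    have : -(w.im - r.im) ≤ -w.im := by have := him r hr; linarith
    exact mul_le_mul_of_nonneg_right this (by positivity)
  set Q := (s.map t).sum with hQdef
  have hσim : σ.im = (s.map fun r => ((w - r)⁻¹).im).sum := by
    rw [hσdef]
    rw [← Complex.coe_imAddGroupHom, map_multiset_sum, Multiset.map_map]
    rfl
  have hQ0 : 0 ≤ Q := by
    apply Multiset.sum_nonneg
    intro x hx
    obtain ⟨r, _, rfl⟩ := Multiset.mem_map.mp hx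
    exact Complex.normSq_nonneg _
  have hσimle : σ.im ≤ -w.im * Q := by
    rw [hσim, hQdef]
    calc (s.map fun r => ((w - r)⁻¹).im).sum ≤ (s.map fun r => -w.im * t r).sum :=
          Multiset.sum_map_le_sum_map _ _ himinv
      _ = -w.im * (s.map t).sum := Multiset.sum_map_mul_left
  -- Cauchy–Schwarz
  have hCS : Complex.normSq σ ≤ (s.card : ℝ) * Q := by
    have h := normSq_sum_le (s.map fun r => (w - r)⁻¹)
    rw [Multiset.card_map, Multiset.map_map] at h
    exact h
  have hkm : (s.card : ℝ) ≤ (m : ℝ) := by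
    have : s.card ≤ m := hcard ▸ hdeg
    exact_mod_cast this
  have hQm : Complex.normSq σ ≤ (m : ℝ) * Q := le_trans hCS (by nlinarith)
  -- conclude
  have him2 : (ζ - w).im = (m : ℝ) * σ.im / Complex.normSq σ := by
    rw [hζw, Complex.div_im]
    simp
    ring
  have hfin : (m : ℝ) * σ.im / Complex.normSq σ ≤ -w.im := by
    rw [div_le_iff₀ hnσ]
    have h1 : (m : ℝ) * σ.im ≤ (m : ℝ) * (-w.im * Q) := by
      apply mul_le_mul_of_nonneg_left hσimle
      positivity
    nlinarith [hQm, hw]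
  have hsub : ζ.im - w.im = (m : ℝ) * σ.im / Complex.normSq σ := by
    rw [← Complex.sub_im]
    exact him2
  linarith [hfin, hsub]


/-- iterated "polar derivative"-style evaluation. -/
noncomputable def valP : List ℂ → ℂ → Polynomial ℂ → ℂ
  | [], z, p => p.eval z
  | α :: l, z, p =>
      valP l z (((l.length : ℂ) + 1) • p + (C (z - α) - X) * derivative p)

/-- the one-step operator decreases the degree bound. -/
lemma step_natDegree_le (n : ℕ) (c : ℂ) (p : Polynomial ℂ) (hp : p.natDegree ≤ n + 1) :
    (((n : ℂ) + 1) • p + (C c - X) * derivative p).natDegree ≤ n := by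
  rw [natDegree_le_iff_coeff_eq_zero]
  intro N hN
  obtain ⟨k, rfl⟩ : ∃ k, N = k + 1 := ⟨N - 1, by omega⟩
  have h1 : p.coeff (k + 2) = 0 := coeff_eq_zero_of_natDegree_lt (by omega)
  simp only [coeff_add, coeff_smul, sub_mul, coeff_sub, coeff_C_mul, coeff_X_mul,
    coeff_derivative, smul_eq_mul]
  rcases Nat.lt_or_ge (k + 1) (n + 1) with h | h
  · omega
  · -- k + 1 ≥ n + 1
    rcases Nat.eq_or_lt_of_le h with heq | hlt
    · have hnk : n = k := by omega
      subst hnk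
      rw [h1]
      ring
    · have h2 : p.coeff (k + 1) = 0 := coeff_eq_zero_of_natDegree_lt (by omega)
      rw [h1, h2]
      ring

/-- eval of the one-step operator. -/
lemma step_eval (n : ℕ) (c : ℂ) (p : Polynomial ℂ) (u : ℂ) :
    (((n : ℂ) + 1) • p + (C c - X) * derivative p).eval u
      = ((n : ℂ) + 1) * p.eval u + (c - u) * (derivative p).eval u := by
  simp [eval_add, eval_mul, eval_smul, smul_eq_mul]

/-- stability of valP. -/
lemma valP_ne_zero : ∀ (l : List ℂ) (p : Polynomial ℂ),
    (∀ r ∈ l, r.im ≤ 0) → p.natDegree ≤ l.length →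
    (∀ u : ℂ, 0 < u.im → p.eval u ≠ 0) →
    ∀ z : ℂ, 0 < z.im → valP l z p ≠ 0
  | [], p, _, _, hst, z, hz => hst z hz
  | α :: l, p, him, hdeg, hst, z, hz => by
    rw [valP]
    set q := ((l.length : ℂ) + 1) • p + (C (z - α) - X) * derivative p with hq
    have hα : α.im ≤ 0 := him α List.mem_cons_self
    have hζ : 0 < (z - α).im := by
      rw [Complex.sub_im]; linarith
    have hqst : ∀ u : ℂ, 0 < u.im → q.eval u ≠ 0 := by
      intro u hu
      rw [hq, step_eval]
      have := laguerre p hst (l.length + 1) (by omega)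
        (by simpa using hdeg) hζ hu
      push_cast at this ⊢
      convert this using 2
    exact valP_ne_zero l q (fun r hr => him r (List.mem_cons_of_mem _ hr))
      (step_natDegree_le l.length (z - α) p (by simpa using hdeg))
      hqst z hz


/-- signed elementary symmetric functions: coefficients of ∏ (X - α). -/
noncomputable def en : List ℂ → ℕ → ℂ
  | [], 0 => 1
  | [], _ + 1 => 0
  | _ :: l, 0 => en l 0
  | α :: l, j + 1 => en l (j + 1) - α * en l j

@[simp] lemma en_zero : ∀ l : List ℂ, en l 0 = 1
  | [] => rfl
  | _ :: l => en_zero l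

lemma en_eq_zero : ∀ (l : List ℂ) (j : ℕ), l.length < j → en l j = 0
  | [], 0 => by intro h; omega
  | [], j + 1 => fun _ => rfl
  | α :: l, 0 => by intro h; omega
  | α :: l, j + 1 => by
    intro h
    simp only [List.length_cons] at h
    rw [en, en_eq_zero l (j + 1) (by omega), en_eq_zero l j (by omega)]
    ring

lemma iterate_derivative_add (p q : Polynomial ℂ) (j : ℕ) :
    derivative^[j] (p + q) = derivative^[j] p + derivative^[j] q := by
  induction j generalizing p q with
  | zero => simp
  | succ j ih => simp [Function.iterate_succ_apply, derivative_add, ih]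

/-- iterated derivative of (C c - X) * r. -/
lemma iterate_derivative_linear_mul (c : ℂ) (r : Polynomial ℂ) :
    ∀ j : ℕ, derivative^[j] ((C c - X) * r)
      = (C c - X) * derivative^[j] r - (j : ℂ) • derivative^[j - 1] r
  | 0 => by simp
  | j + 1 => by
    rw [Function.iterate_succ_apply', iterate_derivative_linear_mul c r j]
    cases j with
    | zero => simp [derivative_mul]; ring
    | succ i =>
      have h1 : i + 1 - 1 = i := rfl
      simp only [derivative_sub, derivative_mul, derivative_smul,
        derivative_C, derivative_X, zero_sub, Function.iterate_succ_apply', h1,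
        Nat.add_sub_cancel]
      push_cast
      simp only [smul_eq_C_mul, C_add, C_1]
      ring

/-- evaluation of iterated derivatives of the step polynomial. -/
lemma step_iter_eval (n : ℕ) (z α : ℂ) (p : Polynomial ℂ) (j : ℕ) :
    (derivative^[j] (((n : ℂ) + 1) • p + (C (z - α) - X) * derivative p)).eval z
      = ((n : ℂ) + 1 - j) * (derivative^[j] p).eval z
        - α * (derivative^[j + 1] p).eval z := by
  rw [iterate_derivative_add, iterate_derivative_smul,
    iterate_derivative_linear_mul]
  have hcomm : ∀ k, derivative^[k] (derivative p) = derivative^[k + 1] p := by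
    intro k
    rw [Function.iterate_succ_apply]
  rw [hcomm j]
  cases j with
  | zero => simp; ring
  | succ i =>
    rw [Nat.add_sub_cancel, hcomm i]
    simp only [eval_add, eval_sub, eval_mul, eval_smul, eval_C, eval_X, smul_eq_mul]
    push_cast
    ring

/-- the key algebraic identity for valP. -/
lemma valP_eq : ∀ (l : List ℂ) (z : ℂ) (p : Polynomial ℂ),
    valP l z p = ∑ j ∈ Finset.range (l.length + 1),
      ((l.length - j).factorial : ℂ) * en l j * (derivative^[j] p).eval z
  | [], z, p => by simp [valP, en]
  | α :: l, z, p => by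
    rw [valP, valP_eq l z _]
    set n := l.length with hn
    have hstep : ∀ j ∈ Finset.range (n + 1),
        ((n - j).factorial : ℂ) * en l j *
          (derivative^[j] (((n : ℂ) + 1) • p + (C (z - α) - X) * derivative p)).eval z
        = ((n + 1 - j).factorial : ℂ) * en l j * (derivative^[j] p).eval z
          + ((n - j).factorial : ℂ) * (-α * en l j) * (derivative^[j + 1] p).eval z := by
      intro j hj
      rw [step_iter_eval]
      have hjn : j ≤ n := by simpa [Nat.lt_succ_iff] using hj
      have hfac : ((n + 1 - j).factorial : ℂ)
          = ((n : ℂ) + 1 - j) * ((n - j).factorial : ℂ) := by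
        have h1 : n + 1 - j = (n - j) + 1 := by omega
        rw [h1, Nat.factorial_succ]
        push_cast [Nat.cast_sub hjn]
        ring
      rw [hfac]
      ring
    rw [Finset.sum_congr rfl hstep, Finset.sum_add_distrib]
    -- RHS: peel off the j = 0 term
    have hRHS : ∑ j ∈ Finset.range ((α :: l).length + 1),
        (((α :: l).length - j).factorial : ℂ) * en (α :: l) j * (derivative^[j] p).eval z
      = (∑ i ∈ Finset.range (n + 1),
          ((n - i).factorial : ℂ) * (en l (i + 1) - α * en l i) * (derivative^[i + 1] p).eval z)
        + ((n + 1).factorial : ℂ) * (derivative^[0] p).eval z := by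
      rw [List.length_cons, ← hn, Finset.sum_range_succ']
      congr 1
      · apply Finset.sum_congr rfl
        intro i _
        have h1 : n + 1 - (i + 1) = n - i := by omega
        rw [h1]
        rfl
      · simp [en_zero]
    rw [hRHS]
    have hA : ∑ j ∈ Finset.range (n + 1),
        ((n + 1 - j).factorial : ℂ) * en l j * (derivative^[j] p).eval z
      = (∑ i ∈ Finset.range (n + 1),
          ((n - i).factorial : ℂ) * en l (i + 1) * (derivative^[i + 1] p).eval z)
        + ((n + 1).factorial : ℂ) * (derivative^[0] p).eval z := by
      rw [Finset.sum_range_succ']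
      rw [Finset.sum_range_succ]
      rw [en_eq_zero l (n + 1) (by omega)]
      simp only [mul_zero, zero_mul, add_zero, Nat.sub_zero, en_zero, mul_one]
      congr 1
      apply Finset.sum_congr rfl
      intro i _
      have h1 : n + 1 - (i + 1) = n - i := by omega
      rw [h1]
    rw [hA]
    have hB : ∑ j ∈ Finset.range (n + 1),
        ((n - j).factorial : ℂ) * (-α * en l j) * (derivative^[j + 1] p).eval z
      = ∑ i ∈ Finset.range (n + 1),
          ((n - i).factorial : ℂ) * (- (α * en l i)) * (derivative^[i + 1] p).eval z := by
      apply Finset.sum_congr rfl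
      intro i _
      ring
    rw [add_right_comm, ← Finset.sum_add_distrib]
    congr 1
    apply Finset.sum_congr rfl
    intro i _
    ring


/-- expansion of ∏ (X - α) in terms of en. -/
lemma prod_eq : ∀ l : List ℂ,
    (l.map fun α => X - C α).prod
      = ∑ j ∈ Finset.range (l.length + 1), C (en l j) * X ^ (l.length - j)
  | [] => by simp [en]
  | α :: l => by
    rw [List.map_cons, List.prod_cons, prod_eq l]
    set n := l.length with hn
    have hlen : (α :: l).length = n + 1 := by simp [hn]
    rw [hlen]
    -- RHS peel j = 0
    rw [Finset.sum_range_succ' (fun j => C (en (α :: l) j) * (X : Polynomial ℂ) ^ (n + 1 - j)) (n + 1)]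
    have hen0 : en (α :: l) 0 = 1 := en_zero _
    have hstep : ∀ i ∈ Finset.range (n + 1),
        C (en (α :: l) (i + 1)) * X ^ (n + 1 - (i + 1))
          = C (en l (i + 1)) * X ^ (n - i) - C α * (C (en l i) * X ^ (n - i)) := by
      intro i _
      have h1 : n + 1 - (i + 1) = n - i := by omega
      rw [h1]
      show C (en l (i + 1) - α * en l i) * X ^ (n - i) = _
      rw [C_sub, C_mul, sub_mul]
      ring
    rw [Finset.sum_congr rfl hstep, Finset.sum_sub_distrib]
    have hL : (X - C α) * ∑ j ∈ Finset.range (n + 1), C (en l j) * X ^ (n - j)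
        = (∑ j ∈ Finset.range (n + 1), C (en l j) * (X ^ (n - j) * X))
          - ∑ j ∈ Finset.range (n + 1), C α * (C (en l j) * X ^ (n - j)) := by
      rw [sub_mul, Finset.mul_sum, Finset.mul_sum]
      congr 1
      apply Finset.sum_congr rfl
      intro j _
      ring
    rw [hL]
    -- first sums
    rw [Finset.sum_range_succ (fun i => C (en l (i + 1)) * (X : Polynomial ℂ) ^ (n - i)) n]
    rw [en_eq_zero l (n + 1) (by omega)]
    simp only [C_0, zero_mul, add_zero]
    rw [Finset.sum_range_succ' (fun j => C (en l j) * ((X : Polynomial ℂ) ^ (n - j) * X)) n]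
    have h0 : en l 0 = 1 := en_zero l
    rw [h0]
    have hX : ∀ j, j < n → (X : Polynomial ℂ) ^ (n - (j+1)) * X = X ^ (n - j) := by
      intro j hj
      rw [← pow_succ]
      congr 1
      omega
    have : ∀ i ∈ Finset.range n,
        C (en l (i + 1)) * (X ^ (n - (i + 1)) * X) = C (en l (i + 1)) * X ^ (n - i) := by
      intro i hi
      rw [hX i (Finset.mem_range.mp hi)]
    rw [Finset.sum_congr rfl this]
    have hXn : (X : Polynomial ℂ) ^ (n - 0) * X = X ^ (n + 1) := by
      rw [← pow_succ]
      norm_num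
    rw [hXn, hen0]
    simp only [C_1, one_mul, Nat.sub_zero]
    ring

/-- coefficient extraction. -/
lemma coeff_extract (d : ℕ) (x : ℕ → ℂ) (i : ℕ) (hi : i ≤ d) :
    (∑ j ∈ Finset.range (d + 1), C (x j) * X ^ (d - j)).coeff (d - i) = x i := by
  rw [finset_sum_coeff]
  rw [Finset.sum_eq_single_of_mem i (Finset.mem_range.mpr (by omega))]
  · simp
  · intro j hj hne
    have hj' : j ≤ d := by simpa [Nat.lt_succ_iff] using hj
    rw [coeff_C_mul, coeff_X_pow]
    have : ¬ (d - i = d - j) := by omega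
    simp [this]


lemma TdiffC_zero (d : ℕ) (a : ℕ → ℂ) : TdiffC d a 0 = 0 := by
  simp [TdiffC]

lemma TdiffC_add (d : ℕ) (a : ℕ → ℂ) (p q : Polynomial ℂ) :
    TdiffC d a (p + q) = TdiffC d a p + TdiffC d a q := by
  simp only [TdiffC, ← Finset.sum_add_distrib]
  apply Finset.sum_congr rfl
  intro j _
  rw [iterate_map_add, smul_add]

lemma TdiffC_smul (d : ℕ) (a : ℕ → ℂ) (b : ℂ) (p : Polynomial ℂ) :
    TdiffC d a (b • p) = b • TdiffC d a p := by
  simp only [TdiffC, Finset.smul_sum]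
  apply Finset.sum_congr rfl
  intro j _
  rw [iterate_derivative_smul, smul_comm]

lemma TbarC_monomial (d : ℕ) (a : ℕ → ℂ) (l : ℕ) (p : Polynomial ℂ) :
    TbarC d a (C p * X ^ l) = C (TdiffC d a p) * X ^ l := by
  rw [TbarC, C_mul_X_pow_eq_monomial, sum_monomial_index]
  rw [TdiffC_zero, C_0, zero_mul]

lemma TbarC_sum {ι : Type*} (d : ℕ) (a : ℕ → ℂ) (s : Finset ι)
    (g : ι → Polynomial (Polynomial ℂ)) :
    TbarC d a (∑ i ∈ s, g i) = ∑ i ∈ s, TbarC d a (g i) := by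
  classical
  induction s using Finset.induction_on with
  | empty => simp [TbarC, Polynomial.sum_zero_index]
  | insert i s hni ih =>
    rw [Finset.sum_insert hni, Finset.sum_insert hni, ← ih]
    rw [TbarC, TbarC, TbarC, Polynomial.sum_add_index]
    · intro l
      rw [TdiffC_zero, C_0, zero_mul]
    · intro l c1 c2
      rw [TdiffC_add, C_add, add_mul]

lemma natkey (d i j : ℕ) (h : j + i ≤ d) :
    d.choose (j + i) * (j + i).descFactorial j = d.descFactorial j * (d - j).choose i := by
  have hmm := Nat.choose_mul (n := d) (show j ≤ j + i by omega)
  rw [Nat.add_sub_cancel_left] at hmm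
  rw [Nat.descFactorial_eq_factorial_mul_choose, Nat.descFactorial_eq_factorial_mul_choose,
    Nat.mul_left_comm, hmm, Nat.mul_assoc]

/-- the inner binomial identity, in ℂ. -/
lemma claim_j (d j : ℕ) (hj : j ≤ d) (z w : ℂ) :
    ∑ k ∈ Finset.range (d + 1),
        (d.choose k : ℂ) * ((k.descFactorial j : ℂ) * z ^ (k - j)) * w ^ (d - k)
      = (d.descFactorial j : ℂ) * (z + w) ^ (d - j) := by
  rw [add_pow, Finset.mul_sum]
  set f : ℕ → ℂ := fun k =>
    (d.choose k : ℂ) * ((k.descFactorial j : ℂ) * z ^ (k - j)) * w ^ (d - k) with hf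
  have h1 : ∑ k ∈ Finset.range (d + 1), f k = ∑ k ∈ Finset.Ico j (d + 1), f k := by
    rw [Finset.range_eq_Ico, ← Finset.sum_Ico_consecutive f (Nat.zero_le j) (by omega)]
    have h0 : ∑ k ∈ Finset.Ico 0 j, f k = 0 := by
      apply Finset.sum_eq_zero
      intro k hk
      have hk' : k < j := (Finset.mem_Ico.mp hk).2
      have : (k.descFactorial j : ℂ) = 0 := by
        rw [Nat.descFactorial_eq_zero_iff_lt.mpr hk']
        simp
      rw [hf]
      simp [this]
    rw [h0, zero_add]
  rw [h1, Finset.sum_Ico_eq_sum_range]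
  have hrange : d + 1 - j = (d - j) + 1 := by omega
  rw [hrange]
  apply Finset.sum_congr rfl
  intro i hi
  have hi' : i ≤ d - j := by simpa [Nat.lt_succ_iff] using hi
  have hji : j + i ≤ d := by omega
  have hkey : ((d.choose (j + i) : ℕ) : ℂ) * (((j + i).descFactorial j : ℕ) : ℂ)
      = ((d.descFactorial j : ℕ) : ℂ) * (((d - j).choose i : ℕ) : ℂ) := by
    exact_mod_cast congrArg (Nat.cast : ℕ → ℂ) (natkey d i j hji)
  rw [hf]
  have e1 : j + i - j = i := by omega
  have e2 : d - (j + i) = d - j - i := by omega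
  simp only [e1, e2]
  calc (d.choose (j + i) : ℂ) * ((((j + i).descFactorial j : ℕ) : ℂ) * z ^ i) * w ^ (d - j - i)
      = ((d.choose (j + i) : ℂ) * (((j + i).descFactorial j : ℕ) : ℂ)) * (z ^ i * w ^ (d - j - i)) := by
        ring
    _ = ((d.descFactorial j : ℕ) : ℂ) * ((((d - j).choose i : ℕ) : ℂ)) * (z ^ i * w ^ (d - j - i)) := by
        rw [hkey]
    _ = (d.descFactorial j : ℂ) * (z ^ i * w ^ (d - j - i) * ((d - j).choose i : ℂ)) := by
        ring

/-- evaluation of T on a power of X. -/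
lemma TdiffC_X_pow_eval (d : ℕ) (a : ℕ → ℂ) (k : ℕ) (u : ℂ) :
    (TdiffC d a (X ^ k)).eval u
      = ∑ j ∈ Finset.range (d + 1), a j * ((k.descFactorial j : ℂ) * u ^ (k - j)) := by
  rw [TdiffC, eval_finset_sum]
  apply Finset.sum_congr rfl
  intro j _
  rw [iterate_derivative_X_pow_eq_natCast_mul, eval_smul, eval_mul, eval_pow, eval_X,
    eval_natCast, smul_eq_mul]

/-- The symbol identity: `T̄((z+w)^d)` evaluated equals `T(X^d)` evaluated at `z + w`. -/
lemma symbol_eval (d : ℕ) (a : ℕ → ℂ) (z w : ℂ) :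
    Polynomial.eval w ((TbarC d a ((C X + X) ^ d)).map (evalRingHom z))
      = (TdiffC d a (X ^ d)).eval (z + w) := by
  have hexp : ((C X + X : Polynomial (Polynomial ℂ))) ^ d
      = ∑ k ∈ Finset.range (d + 1), C ((d.choose k : ℂ) • X ^ k) * X ^ (d - k) := by
    rw [add_pow]
    apply Finset.sum_congr rfl
    intro k _
    rw [smul_eq_C_mul, C_mul, C_pow,
      map_natCast (Polynomial.C : ℂ →+* Polynomial ℂ) (d.choose k),
      map_natCast (Polynomial.C : Polynomial ℂ →+* Polynomial (Polynomial ℂ)) (d.choose k)]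
    ring
  rw [hexp, TbarC_sum]
  have hterm : ∀ k ∈ Finset.range (d + 1),
      TbarC d a (C ((d.choose k : ℂ) • X ^ k) * X ^ (d - k))
        = C ((d.choose k : ℂ) • TdiffC d a (X ^ k)) * X ^ (d - k) := by
    intro k _
    rw [TbarC_monomial, TdiffC_smul]
  rw [Finset.sum_congr rfl hterm]
  rw [← Polynomial.coe_mapRingHom, map_sum, eval_finset_sum]
  have hterm2 : ∀ k ∈ Finset.range (d + 1),
      ((Polynomial.mapRingHom (evalRingHom z)) (C ((d.choose k : ℂ) • TdiffC d a (X ^ k)) * X ^ (d - k))).eval w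
        = (d.choose k : ℂ) * (TdiffC d a (X ^ k)).eval z * w ^ (d - k) := by
    intro k _
    rw [map_mul, map_pow, Polynomial.coe_mapRingHom, Polynomial.map_C, Polynomial.map_X,
      eval_mul, eval_pow, eval_X, eval_C]
    simp [coe_evalRingHom]
  rw [Finset.sum_congr rfl hterm2]
  have hL : ∀ k ∈ Finset.range (d + 1),
      (d.choose k : ℂ) * (TdiffC d a (X ^ k)).eval z * w ^ (d - k)
        = ∑ j ∈ Finset.range (d + 1),
            (d.choose k : ℂ) * (a j * ((k.descFactorial j : ℂ) * z ^ (k - j))) * w ^ (d - k) := by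
    intro k _
    rw [TdiffC_X_pow_eval, Finset.mul_sum, Finset.sum_mul]
  rw [Finset.sum_congr rfl hL, Finset.sum_comm]
  rw [TdiffC_X_pow_eval]
  apply Finset.sum_congr rfl
  intro j hj
  have hjd : j ≤ d := by simpa [Nat.lt_succ_iff] using hj
  have : ∑ k ∈ Finset.range (d + 1),
      (d.choose k : ℂ) * (a j * ((k.descFactorial j : ℂ) * z ^ (k - j))) * w ^ (d - k)
    = a j * ∑ k ∈ Finset.range (d + 1),
        (d.choose k : ℂ) * ((k.descFactorial j : ℂ) * z ^ (k - j)) * w ^ (d - k) := by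
    rw [Finset.mul_sum]
    apply Finset.sum_congr rfl
    intro k _
    ring
  rw [this, claim_j d j hjd z w]


/-- expansion of `T(X^d)` as a polynomial. -/
lemma TdiffC_X_pow (d : ℕ) (a : ℕ → ℂ) :
    TdiffC d a (X ^ d)
      = ∑ j ∈ Finset.range (d + 1), C (a j * (d.descFactorial j : ℂ)) * X ^ (d - j) := by
  rw [TdiffC]
  apply Finset.sum_congr rfl
  intro j _
  rw [iterate_derivative_X_pow_eq_natCast_mul, ← map_natCast (Polynomial.C : ℂ →+* Polynomial ℂ),
    smul_eq_C_mul, C_mul]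
  ring


end BBaux

open BBaux in
theorem stmt_10 (d : ℕ) (a : ℕ → ℂ) (ha0 : a 0 = 1)
    -- the symbol `T̄((z+w)^d)` is stable in `(z, w)`:
    (hsymb : ∀ z w : ℂ, 0 < z.im → 0 < w.im →
      Polynomial.eval w
        ((TbarC d a ((Polynomial.C Polynomial.X + Polynomial.X) ^ d)).map
          (Polynomial.evalRingHom z)) ≠ 0) :
    -- then `T` preserves stability:
    ∀ p : Polynomial ℂ, p.natDegree ≤ d →
      (∀ z : ℂ, 0 < z.im → Polynomial.eval z p ≠ 0) →
      TdiffC d a p = 0 ∨ (∀ z : ℂ, 0 < z.im → Polynomial.eval z (TdiffC d a p) ≠ 0) := by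
  set F := TdiffC d a (X ^ d) with hF
  have hFexp : F = ∑ j ∈ Finset.range (d + 1), C (a j * (d.descFactorial j : ℂ)) * X ^ (d - j) :=
    TdiffC_X_pow d a
  have hcoeffd : F.coeff d = 1 := by
    have h := coeff_extract d (fun j => a j * (d.descFactorial j : ℂ)) 0 (Nat.zero_le d)
    rw [← hFexp] at h
    simpa [ha0] using h
  have hFdegle : F.natDegree ≤ d := by
    rw [hFexp]
    apply natDegree_sum_le_of_forall_le
    intro j _
    apply le_trans (natDegree_C_mul_le _ _)
    simpa using Nat.sub_le d j
  have hFne : F ≠ 0 := fun h => by simp [h] at hcoeffd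
  have hFdeg : F.natDegree = d :=
    le_antisymm hFdegle (le_natDegree_of_ne_zero (hcoeffd ▸ one_ne_zero))
  have hFmonic : F.Monic := by
    rw [Monic, leadingCoeff, hFdeg, hcoeffd]
  -- stability of F on the upper half-plane
  have hFstable : ∀ u : ℂ, 0 < u.im → F.eval u ≠ 0 := by
    intro u hu
    have h2 : (0 : ℝ) < (u / 2).im := by
      rw [show ((2 : ℂ)) = ((2 : ℝ) : ℂ) by norm_num, Complex.div_ofReal_im]
      linarith
    have := hsymb (u / 2) (u / 2) h2 h2
    rw [symbol_eval d a (u / 2) (u / 2)] at this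
    have huu : u / 2 + u / 2 = u := by ring
    rwa [huu] at this
  -- roots of F
  have hsp : F.Splits := IsAlgClosed.splits F
  set l := F.roots.toList with hl
  have hlen : l.length = d := by
    rw [hl, Multiset.length_toList, (splits_iff_card_roots).mp hsp, hFdeg]
  have hlim : ∀ r ∈ l, r.im ≤ 0 := by
    intro r hr
    by_contra hc
    push_neg at hc
    have hmem : r ∈ F.roots := by rwa [hl, Multiset.mem_toList] at hr
    exact hFstable r hc (isRoot_of_mem_roots hmem)
  have hprod : F = (l.map fun α => X - C α).prod := by
    have h := hsp.eq_prod_roots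
    rw [hFmonic.leadingCoeff, C_1, one_mul] at h
    rw [h, ← Multiset.coe_toList F.roots, ← hl]
    rw [Multiset.map_coe, Multiset.prod_coe]
  -- identify coefficients: a j * descFactorial = en l j
  have hcoeffs : ∀ j, j ≤ d → a j * (d.descFactorial j : ℂ) = en l j := by
    intro j hj
    have h1 : F = ∑ j ∈ Finset.range (d + 1), C (en l j) * X ^ (d - j) := by
      rw [hprod, prod_eq l, hlen]
    have h2 := congrArg (fun q => Polynomial.coeff q (d - j)) (hFexp.symm.trans h1)
    rwa [coeff_extract d (fun j => a j * (d.descFactorial j : ℂ)) j hj,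
      coeff_extract d (fun j => en l j) j hj] at h2
  -- main conclusion
  intro p hdeg hstab
  right
  intro z hz
  have hval := valP_ne_zero l p hlim (hlen ▸ hdeg) hstab z hz
  have hkey : valP l z p = (d.factorial : ℂ) * (TdiffC d a p).eval z := by
    rw [valP_eq, hlen]
    have : ∀ j ∈ Finset.range (d + 1),
        ((d - j).factorial : ℂ) * en l j * (derivative^[j] p).eval z
          = (d.factorial : ℂ) * (a j * (derivative^[j] p).eval z) := by
      intro j hj
      have hjd : j ≤ d := by simpa [Nat.lt_succ_iff] using hj
      rw [← hcoeffs j hjd]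
      have hfac : ((d - j).factorial : ℂ) * (d.descFactorial j : ℂ) = (d.factorial : ℂ) := by
        exact_mod_cast congrArg (Nat.cast : ℕ → ℂ) (Nat.factorial_mul_descFactorial hjd)
      calc ((d - j).factorial : ℂ) * (a j * (d.descFactorial j : ℂ)) * (derivative^[j] p).eval z
          = (((d - j).factorial : ℂ) * (d.descFactorial j : ℂ)) * (a j * (derivative^[j] p).eval z) := by
            ring
        _ = (d.factorial : ℂ) * (a j * (derivative^[j] p).eval z) := by rw [hfac]
    rw [Finset.sum_congr rfl this, ← Finset.mul_sum]
    congr 1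
    rw [TdiffC, eval_finset_sum]
    apply Finset.sum_congr rfl
    intro j _
    rw [eval_smul, smul_eq_mul]
  intro h0
  rw [h0, mul_zero] at hkey
  exact hval hkey
end
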